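/- There exists a constant C > 0 such that the following holds. For every real ε with 0 < ε < 1 and all integers N ≥ 2, b ≥ 2, n ≥ 1 satisfying (n : ℝ) ≤ (b : ℝ)^{1−ε}, there exist a positive integer K with K ≤ ⌈C · ε⁻¹ · (log N / log b)⌉ and functions g₁, g₂, …, g_K : Fin N → Fin b such that: for every nonempty subset V ⊆ Fin N with |V| ≤ n, there exist i ∈ {1,…,K} and j ∈ Fin b such that exactly one element x ∈ V satisfies g_i(x) = j. -/

import Mathlib

open Finset

variable {N b : ℕ}

/-- bad: no singleton part -/
def badP (V : Finset (Fin N)) (g : Fin N → Fin b) : Prop :=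
  ∀ j, (V.filter (fun x => g x = j)).card ≠ 1

instance (V : Finset (Fin N)) (g : Fin N → Fin b) : Decidable (badP V g) := by
  unfold badP; infer_instance

/-- set of bad functions -/
noncomputable def TV (V : Finset (Fin N)) : Finset (Fin N → Fin b) :=
  univ.filter (badP V)

lemma image_small {V : Finset (Fin N)} {g : Fin N → Fin b} (h : badP V g) :
    2 * (V.image g).card ≤ V.card := by
  have hsum : V.card = ∑ j ∈ V.image g, (V.filter (fun x => g x = j)).card :=
    card_eq_sum_card_fiberwise (fun x hx => mem_image_of_mem g hx)
  have h2 : ∀ j ∈ V.image g, 2 ≤ (V.filter (fun x => g x = j)).card := by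
    intro j hj
    obtain ⟨x, hx, hgx⟩ := mem_image.1 hj
    have hne : (V.filter (fun x => g x = j)).card ≠ 0 := by
      simp only [ne_eq, card_eq_zero, filter_eq_empty_iff]
      exact fun h' => h' hx hgx
    have := h j
    omega
  calc 2 * (V.image g).card = ∑ _j ∈ V.image g, 2 := by
        rw [Finset.sum_const, smul_eq_mul, mul_comm]
    _ ≤ ∑ j ∈ V.image g, (V.filter (fun x => g x = j)).card := Finset.sum_le_sum h2
    _ = V.card := hsum.symm

/-- count of functions constrained on V -/
lemma count_constrained (V : Finset (Fin N)) (S : Finset (Fin b)) :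
    (univ.filter (fun g : Fin N → Fin b => ∀ x ∈ V, g x ∈ S)).card
      = S.card ^ V.card * b ^ (N - V.card) := by
  have : univ.filter (fun g : Fin N → Fin b => ∀ x ∈ V, g x ∈ S)
      = Fintype.piFinset (fun x => if x ∈ V then S else univ) := by
    ext g
    simp only [mem_filter, mem_univ, true_and, Fintype.mem_piFinset]
    constructor
    · intro h x; by_cases hx : x ∈ V <;> simp [hx, h x]
    · intro h x hx; have := h x; simpa [hx] using this
  rw [this, Fintype.card_piFinset]
  rw [← Finset.prod_filter_mul_prod_filter_not univ (· ∈ V)]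
  have e1 : ∀ x ∈ univ.filter (· ∈ V), ((if x ∈ V then S else univ).card) = S.card := by
    intro x hx; simp only [mem_filter] at hx; simp [hx.2]
  have e2 : ∀ x ∈ univ.filter (¬ · ∈ V), ((if x ∈ V then S else univ).card) = b := by
    intro x hx; simp only [mem_filter] at hx; simp [hx.2]
  rw [Finset.prod_congr rfl e1, Finset.prod_congr rfl e2, Finset.prod_const, Finset.prod_const]
  congr 1
  · congr 1; simpa using (Finset.filter_mem_eq_inter (s := univ) (t := V)).trans (by simp)
  · congr 1
    have : univ.filter (¬ · ∈ V) = Vᶜ := by ext x; simp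
    rw [this, card_compl, Fintype.card_fin]

lemma sparse_count (V : Finset (Fin N)) (hVb : V.card ≤ b) :
    (TV V : Finset (Fin N → Fin b)).card
      ≤ Nat.choose b (V.card / 2) * (V.card / 2) ^ V.card * b ^ (N - V.card) := by
  classical
  set m := V.card with hm
  set s := m / 2 with hs
  have hsub : TV V ⊆ (powersetCard s (univ : Finset (Fin b))).biUnion
      (fun S => univ.filter (fun g : Fin N → Fin b => ∀ x ∈ V, g x ∈ S)) := by
    intro g hg
    have hbad : badP V g := (mem_filter.1 hg).2
    have himg : (V.image g).card ≤ s := by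
      have := image_small hbad
      omega
    obtain ⟨S, hSsub, hScard⟩ := Finset.exists_superset_card_eq himg
      (by simpa using hVb.trans' (by omega))
    refine mem_biUnion.2 ⟨S, ?_, ?_⟩
    · exact mem_powersetCard.2 ⟨subset_univ S, hScard⟩
    · exact mem_filter.2 ⟨mem_univ _, fun x hx => hSsub (mem_image_of_mem g hx)⟩
  calc (TV V).card ≤ _ := card_le_card hsub
    _ ≤ ∑ S ∈ powersetCard s (univ : Finset (Fin b)),
        (univ.filter (fun g : Fin N → Fin b => ∀ x ∈ V, g x ∈ S)).card := card_biUnion_le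
    _ ≤ _ := by
        rw [Finset.sum_congr rfl (fun S hS => ?_)]
        · rw [Finset.sum_const, card_powersetCard, card_univ, Fintype.card_fin, smul_eq_mul,
            mul_assoc]
        · rw [count_constrained V S, (mem_powersetCard.1 hS).2]

lemma moment_count (V : Finset (Fin N)) (r : ℕ) :
    (TV V : Finset (Fin N → Fin b)).card * Nat.choose (b - V.card / 2) r
      ≤ Nat.choose b r * ((b - r) ^ V.card * b ^ (N - V.card)) := by
  classical
  set m := V.card with hm
  set s := m / 2 with hs
  have key : ∀ T : Finset (Fin b),
      (univ.filter (fun g : Fin N → Fin b => T ⊆ univ \ V.image g)).card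
        = (b - T.card) ^ m * b ^ (N - m) := by
    intro T
    have : (univ.filter (fun g : Fin N → Fin b => T ⊆ univ \ V.image g))
        = (univ.filter (fun g : Fin N → Fin b => ∀ x ∈ V, g x ∈ univ \ T)) := by
      ext g
      simp only [mem_filter, mem_univ, true_and]
      constructor
      · intro h x hx
        simp only [mem_sdiff, mem_univ, true_and]
        intro hT
        have := h hT
        simp only [mem_sdiff, mem_univ, true_and] at this
        exact this (mem_image_of_mem g hx)
      · intro h j hj
        simp only [mem_sdiff, mem_univ, true_and, mem_image]
        rintro ⟨x, hx, rfl⟩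
        have := h x hx
        simp only [mem_sdiff, mem_univ, true_and] at this
        exact this hj
    rw [this, count_constrained V (univ \ T), ← hm]
    congr 2
    rw [card_sdiff_of_subset (subset_univ T), card_univ, Fintype.card_fin]
  -- double counting
  have dbl : ∑ g ∈ (univ : Finset (Fin N → Fin b)), ((univ \ V.image g).powersetCard r).card
      = Nat.choose b r * ((b - r) ^ m * b ^ (N - m)) := by
    have e1 : ∀ g : Fin N → Fin b, (univ \ V.image g).powersetCard r
        = (powersetCard r (univ : Finset (Fin b))).filter (fun T => T ⊆ univ \ V.image g) := by
      intro g; ext T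
      simp only [mem_powersetCard, mem_filter, subset_univ, true_and]
      tauto
    calc ∑ g ∈ (univ : Finset (Fin N → Fin b)), ((univ \ V.image g).powersetCard r).card
        = ∑ g ∈ (univ : Finset (Fin N → Fin b)), ∑ T ∈ powersetCard r (univ : Finset (Fin b)),
            if T ⊆ univ \ V.image g then 1 else 0 := by
          refine Finset.sum_congr rfl (fun g _ => ?_)
          rw [e1 g, Finset.card_filter]
      _ = ∑ T ∈ powersetCard r (univ : Finset (Fin b)), ∑ g ∈ (univ : Finset (Fin N → Fin b)),
            if T ⊆ univ \ V.image g then 1 else 0 := Finset.sum_comm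
      _ = ∑ T ∈ powersetCard r (univ : Finset (Fin b)), (b - r) ^ m * b ^ (N - m) := by
          refine Finset.sum_congr rfl (fun T hT => ?_)
          rw [← Finset.card_filter, key T, (mem_powersetCard.1 hT).2]
      _ = _ := by rw [Finset.sum_const, card_powersetCard, card_univ, Fintype.card_fin,
            smul_eq_mul]
  have lower : (TV V : Finset (Fin N → Fin b)).card * Nat.choose (b - s) r
      ≤ ∑ g ∈ (univ : Finset (Fin N → Fin b)), ((univ \ V.image g).powersetCard r).card := by
    calc (TV V).card * Nat.choose (b - s) r
        = ∑ _g ∈ TV V, Nat.choose (b - s) r := by rw [Finset.sum_const, smul_eq_mul]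
      _ ≤ ∑ g ∈ TV V, ((univ \ V.image g).powersetCard r).card := by
          refine Finset.sum_le_sum (fun g hg => ?_)
          rw [card_powersetCard]
          refine Nat.choose_le_choose r ?_
          have hbad : badP V g := (mem_filter.1 hg).2
          have := image_small hbad
          rw [card_sdiff_of_subset (subset_univ _), card_univ, Fintype.card_fin]
          omega
      _ ≤ _ := Finset.sum_le_sum_of_subset (subset_univ _)
  exact lower.trans (le_of_eq dbl)

lemma geom_half_aux : ∀ n : ℕ, 1 ≤ n → ∑ m ∈ Finset.Icc 2 n, ((1:ℝ)/2) ^ m ≤ 1/2 - (1/2)^n := by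
  intro n hn
  induction n, hn using Nat.le_induction with
  | base => norm_num
  | succ k hk ih =>
    rw [Finset.sum_Icc_succ_top (by omega : 2 ≤ k + 1)]
    have : ((1:ℝ)/2)^(k+1) = (1/2) * (1/2)^k := by rw [pow_succ]; ring
    rw [this]
    nlinarith [pow_pos (by norm_num : (0:ℝ) < 1/2) k]

lemma geom_half_sum (n : ℕ) : ∑ m ∈ Finset.Icc 2 n, ((1:ℝ)/2) ^ m ≤ 1/2 := by
  rcases Nat.eq_zero_or_pos n with h | h
  · subst h; simp
  · have := geom_half_aux n h
    have : (0:ℝ) < (1/2)^n := pow_pos (by norm_num) n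
    linarith [geom_half_aux n h]

lemma main_count {N b n K : ℕ} (hN : 2 ≤ N) (hb : 2 ≤ b) (hK : 0 < K) (δ : ℝ)
    (hTV : ∀ V : Finset (Fin N), 2 ≤ V.card → V.card ≤ n →
      ((TV V : Finset (Fin N → Fin b)).card : ℝ) ≤ Real.exp (-δ * V.card) * (b:ℝ)^N)
    (hx : (N:ℝ) * Real.exp (-δ * K) ≤ 1/2) :
    ∃ g : Fin K → (Fin N → Fin b),
      ∀ V : Finset (Fin N), V.Nonempty → V.card ≤ n →
        ∃ (i : Fin K) (j : Fin b),
          (V.filter (fun x => g i x = j)).card = 1 := by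
  classical
  set Bad : Finset (Fin K → (Fin N → Fin b)) :=
    univ.filter (fun G => ∃ V : Finset (Fin N), 2 ≤ V.card ∧ V.card ≤ n ∧ ∀ i, badP V (G i))
    with hBad
  have hsub : Bad ⊆ (Finset.Icc 2 n).biUnion (fun m =>
      (powersetCard m (univ : Finset (Fin N))).biUnion
        (fun V => Fintype.piFinset (fun _ : Fin K => TV V))) := by
    intro G hG
    obtain ⟨V, h2, hn', hbad⟩ := (mem_filter.1 hG).2
    refine mem_biUnion.2 ⟨V.card, Finset.mem_Icc.2 ⟨h2, hn'⟩, mem_biUnion.2 ⟨V, ?_, ?_⟩⟩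
    · exact mem_powersetCard.2 ⟨subset_univ V, rfl⟩
    · exact Fintype.mem_piFinset.2 (fun i => mem_filter.2 ⟨mem_univ _, hbad i⟩)
  have hcard : (Bad.card : ℝ) < ((b:ℝ)^N)^K := by
    have step1 : Bad.card ≤ ∑ m ∈ Finset.Icc 2 n,
        ∑ V ∈ powersetCard m (univ : Finset (Fin N)), (TV V : Finset (Fin N → Fin b)).card ^ K := by
      refine (card_le_card hsub).trans (card_biUnion_le.trans (Finset.sum_le_sum fun m _ => ?_))
      refine card_biUnion_le.trans (Finset.sum_le_sum fun V _ => ?_)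
      rw [Fintype.card_piFinset]
      simp
    have step2 : (Bad.card : ℝ) ≤ ∑ m ∈ Finset.Icc 2 n,
        ((1:ℝ)/2)^m * ((b:ℝ)^N)^K := by
      calc (Bad.card : ℝ)
          ≤ ((∑ m ∈ Finset.Icc 2 n, ∑ V ∈ powersetCard m (univ : Finset (Fin N)),
              (TV V : Finset (Fin N → Fin b)).card ^ K : ℕ) : ℝ) := Nat.cast_le.2 step1
        _ ≤ ∑ m ∈ Finset.Icc 2 n, ((1:ℝ)/2)^m * ((b:ℝ)^N)^K := by
            push_cast
            refine Finset.sum_le_sum fun m hm => ?_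
            obtain ⟨h2m, hmn⟩ := Finset.mem_Icc.1 hm
            have hterm : ∀ V ∈ powersetCard m (univ : Finset (Fin N)),
                (((TV V : Finset (Fin N → Fin b)).card : ℝ)) ^ K
                  ≤ (Real.exp (-δ * m) * ((b:ℝ)^N)) ^ K := by
              intro V hV
              have hVm : V.card = m := (mem_powersetCard.1 hV).2
              refine pow_le_pow_left₀ (by positivity) ?_ K
              rw [← hVm]
              exact hTV V (by omega) (by omega)
            calc ∑ V ∈ powersetCard m (univ : Finset (Fin N)),
                  (((TV V : Finset (Fin N → Fin b)).card : ℝ)) ^ K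
                ≤ ∑ _V ∈ powersetCard m (univ : Finset (Fin N)),
                  (Real.exp (-δ * m) * ((b:ℝ)^N)) ^ K := Finset.sum_le_sum hterm
              _ = (Nat.choose N m : ℝ) * (Real.exp (-δ * m) * ((b:ℝ)^N)) ^ K := by
                  rw [Finset.sum_const, card_powersetCard, card_univ, Fintype.card_fin,
                    nsmul_eq_mul]
              _ ≤ ((1:ℝ)/2)^m * ((b:ℝ)^N)^K := by
                  rw [mul_pow]
                  have hchoose : (Nat.choose N m : ℝ) ≤ (N:ℝ)^m := by
                    exact_mod_cast Nat.cast_le.2 (Nat.choose_le_pow N m)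
                  have hexp : (Real.exp (-δ * m)) ^ K = (Real.exp (-δ * K)) ^ m := by
                    rw [← Real.exp_nat_mul, ← Real.exp_nat_mul]; ring_nf
                  have hNx : (N:ℝ)^m * (Real.exp (-δ * K)) ^ m ≤ ((1:ℝ)/2)^m := by
                    rw [← mul_pow]
                    refine pow_le_pow_left₀ (by positivity) ?_ m
                    linarith
                  calc (Nat.choose N m : ℝ) * ((Real.exp (-δ * m)) ^ K * (((b:ℝ)^N)) ^ K)
                      = ((N:ℝ)^m * (Real.exp (-δ*K))^m) * (((b:ℝ)^N))^K
                        * ((Nat.choose N m : ℝ) / (N:ℝ)^m) := by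
                        rw [hexp]; field_simp
                    _ ≤ _ := by
                        have h1 : ((Nat.choose N m : ℝ) / (N:ℝ)^m) ≤ 1 := by
                          rw [div_le_one (by positivity)]; exact hchoose
                        have h2 : (0:ℝ) ≤ ((N:ℝ)^m * (Real.exp (-δ*K))^m) * (((b:ℝ)^N))^K :=
                          by positivity
                        nlinarith [mul_le_of_le_one_right h2 h1,
                          mul_le_mul_of_nonneg_right hNx (by positivity : (0:ℝ) ≤ (((b:ℝ)^N))^K)]
    calc (Bad.card : ℝ) ≤ ∑ m ∈ Finset.Icc 2 n, ((1:ℝ)/2)^m * ((b:ℝ)^N)^K := step2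
      _ = (∑ m ∈ Finset.Icc 2 n, ((1:ℝ)/2)^m) * ((b:ℝ)^N)^K := by rw [Finset.sum_mul]
      _ ≤ (1/2) * ((b:ℝ)^N)^K := by
          have := geom_half_sum n
          have hpos : (0:ℝ) < ((b:ℝ)^N)^K := by positivity
          nlinarith
      _ < ((b:ℝ)^N)^K := by
          have hpos : (0:ℝ) < ((b:ℝ)^N)^K := by positivity
          linarith
  -- extract a good tuple
  have hlt : Bad.card < Fintype.card (Fin K → (Fin N → Fin b)) := by
    have : Fintype.card (Fin K → (Fin N → Fin b)) = (b ^ N) ^ K := by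
      simp [Fintype.card_fun]
    rw [this]
    have : ((Bad.card : ℝ)) < (((b^N)^K : ℕ) : ℝ) := by push_cast; exact hcard
    exact_mod_cast this
  obtain ⟨G, hG⟩ : ∃ G : Fin K → (Fin N → Fin b), G ∉ Bad := by
    by_contra h
    push_neg at h
    have : (univ : Finset (Fin K → (Fin N → Fin b))) ⊆ Bad := fun G _ => h G
    have := card_le_card this
    rw [card_univ] at this
    omega
  refine ⟨G, fun V hVne hVn => ?_⟩
  rcases Nat.lt_or_ge V.card 2 with hsmall | hbig
  · -- singleton
    have h1 : V.card = 1 := by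
      have := card_pos.2 hVne
      omega
    obtain ⟨x, hx⟩ := Finset.card_eq_one.1 h1
    refine ⟨⟨0, hK⟩, G ⟨0, hK⟩ x, ?_⟩
    subst hx
    rw [Finset.filter_singleton]
    simp
  · simp only [hBad, mem_filter, mem_univ, true_and, not_exists] at hG
    have := hG V
    push_neg at this
    obtain ⟨i, hi⟩ := this hbig hVn
    unfold badP at hi
    push_neg at hi
    obtain ⟨j, hj⟩ := hi
    exact ⟨i, j, hj⟩

open Real in
lemma pow_eq_exp' {p : ℝ} (hp : 0 < p) (k : ℕ) : p ^ k = Real.exp (k * Real.log p) := by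
  rw [Real.exp_nat_mul, Real.exp_log hp]

open Real in
lemma self_pow_le {s : ℕ} : (s:ℝ) ^ s ≤ 3 ^ s * (Nat.factorial s : ℝ) := by
  induction s with
  | zero => norm_num
  | succ s ih =>
    rcases Nat.eq_zero_or_pos s with h | h
    · subst h; norm_num
    have hs : (1:ℝ) ≤ (s:ℝ) := by exact_mod_cast h
    have h1 : ((s:ℝ)+1) ^ s ≤ 3 * (s:ℝ)^s := by
      have e1 : ((s:ℝ)+1) = (s:ℝ) * (1 + 1/(s:ℝ)) := by field_simp
      have e2 : (1 + 1/(s:ℝ)) ^ s ≤ 3 := by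
        have := Real.add_one_le_exp (1/(s:ℝ))
        
        have h3 : (1 + 1/(s:ℝ)) ^ s ≤ (Real.exp (1/(s:ℝ))) ^ s := by
          refine pow_le_pow_left₀ (by positivity) (by linarith) s
        rw [← Real.exp_nat_mul] at h3
        have : (s:ℝ) * (1/(s:ℝ)) = 1 := by field_simp
        rw [this] at h3
        exact h3.trans (le_of_lt (by
          have := Real.exp_one_lt_d9
          linarith))
      calc ((s:ℝ)+1) ^ s = (s:ℝ)^s * (1 + 1/(s:ℝ))^s := by rw [e1, mul_pow]
        _ ≤ (s:ℝ)^s * 3 := by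
            refine mul_le_mul_of_nonneg_left e2 (by positivity)
        _ = 3 * (s:ℝ)^s := by ring
    push_cast
    calc ((s:ℝ)+1) ^ (s+1) = ((s:ℝ)+1) * ((s:ℝ)+1)^s := by ring
      _ ≤ ((s:ℝ)+1) * (3 * (s:ℝ)^s) := by
          refine mul_le_mul_of_nonneg_left h1 (by positivity)
      _ ≤ ((s:ℝ)+1) * (3 * (3^s * (Nat.factorial s : ℝ))) := by
          refine mul_le_mul_of_nonneg_left (by nlinarith [pow_nonneg (by norm_num : (0:ℝ) ≤ 3) s]) (by positivity)
      _ = 3 ^ (s+1) * (((s:ℝ)+1) * (Nat.factorial s : ℝ)) := by ring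
      _ = 3 ^ (s+1) * (Nat.factorial (s+1) : ℝ) := by
          rw [Nat.factorial_succ]; push_cast; ring

lemma log32_ge : Real.log 3 + 1 ≤ Real.log 32 := by
  have h1 : (3:ℝ) * Real.exp 1 ≤ 32 := by
    have := Real.exp_one_lt_d9
    nlinarith
  have h2 : Real.log (3 * Real.exp 1) ≤ Real.log 32 :=
    Real.log_le_log (by positivity) h1
  rwa [Real.log_mul (by norm_num) (Real.exp_ne_zero 1), Real.log_exp] at h2

lemma log_ratio_le : Real.log 3 - Real.log 2 ≤ 1/2 := by
  have h1 : (3:ℝ) ≤ 2 * Real.exp (1/2) := by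
    have := Real.add_one_le_exp (1/2 : ℝ)
    nlinarith
  have h2 : Real.log 3 ≤ Real.log (2 * Real.exp (1/2)) :=
    Real.log_le_log (by norm_num) h1
  rw [Real.log_mul (by norm_num) (Real.exp_ne_zero _), Real.log_exp] at h2
  linarith

lemma exp_chord {x : ℝ} (h0 : 0 ≤ x) (h1 : x ≤ 3/5) : Real.exp (-(8/5) * x) ≤ 1 - x := by
  set t := (5/3) * x with ht
  have ht0 : 0 ≤ t := by positivity
  have ht1 : t ≤ 1 := by rw [ht]; linarith
  have hconv := convexOn_exp.2 (Set.mem_univ (-(24/25) : ℝ)) (Set.mem_univ (0:ℝ))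
    (by linarith : (0:ℝ) ≤ t) (by linarith : (0:ℝ) ≤ 1 - t) (by ring)
  simp only [smul_eq_mul, mul_zero, add_zero, Real.exp_zero, mul_one] at hconv
  have harg : t * -(24/25) = -(8/5) * x := by rw [ht]; ring
  rw [harg] at hconv
  have hexp : Real.exp (-(24/25) : ℝ) ≤ 2/5 := by
    have h25 : (5:ℝ)/2 ≤ Real.exp (24/25) := by
      have h0 : (1 + 2/25 : ℝ) ≤ Real.exp (2/25) := by
        have := Real.add_one_le_exp (2/25 : ℝ); linarith
      have h2 : ((1:ℝ) + 2/25) ^ (12:ℕ) ≤ (Real.exp (2/25)) ^ (12:ℕ) :=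
        pow_le_pow_left₀ (by norm_num) h0 12
      rw [← Real.exp_nat_mul] at h2
      have : ((12:ℕ):ℝ) * (2/25) = 24/25 := by norm_num
      rw [this] at h2
      refine le_trans ?_ h2
      norm_num
    have := Real.exp_pos (24/25 : ℝ)
    rw [Real.exp_neg]
    rw [inv_le_comm₀ this (by norm_num)]
    linarith
  calc Real.exp (-(8/5) * x) ≤ t * Real.exp (-(24/25):ℝ) + (1 - t) := by linarith
    _ ≤ t * (2/5) + (1 - t) := by nlinarith
    _ = 1 - x := by rw [ht]; ring

lemma choose_ratio {b s r : ℕ} (h : s + r ≤ b) :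
    Nat.choose b r * (b - s - r + 1) ^ r ≤ Nat.choose (b - s) r * b ^ r := by
  have key : Nat.descFactorial b r * (b - s - r + 1) ^ r
      ≤ Nat.descFactorial (b - s) r * b ^ r := by
    rw [Nat.descFactorial_eq_prod_range, Nat.descFactorial_eq_prod_range]
    have p1 : (b - s - r + 1) ^ r = ∏ _i ∈ Finset.range r, (b - s - r + 1) := by
      rw [Finset.prod_const, Finset.card_range]
    have p2 : b ^ r = ∏ _i ∈ Finset.range r, b := by
      rw [Finset.prod_const, Finset.card_range]
    rw [p1, p2, ← Finset.prod_mul_distrib, ← Finset.prod_mul_distrib]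
    refine Finset.prod_le_prod' (fun i hi => ?_)
    have hi' : i < r := Finset.mem_range.1 hi
    -- (b - i) * (b - s - r + 1) ≤ (b - s - i) * b
    have h1 : i ≤ b := by omega
    have h2 : s + i ≤ b := by omega
    zify [h1, h2, (by omega : s ≤ b), (by omega : s + r ≤ b), (by omega : r ≤ b - s),
      (by omega : i ≤ b - s)]
    have hr1 : (1:ℤ) ≤ (r:ℤ) := by exact_mod_cast Nat.one_le_iff_ne_zero.2 (by omega)
    have e1 : (i:ℤ) ≤ (r:ℤ) - 1 := by
      have : i + 1 ≤ r := hi'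
      have := (Nat.cast_le (α := ℤ)).2 this
      push_cast at this; omega
    have e2 : (0:ℤ) ≤ (s:ℤ) + (r:ℤ) - 1 := by
      have : (0:ℤ) ≤ (s:ℤ) := Int.natCast_nonneg s
      omega
    have e3 : (s:ℤ) + (r:ℤ) - 1 ≤ (b:ℤ) := by
      have := (Nat.cast_le (α := ℤ)).2 h
      push_cast at this; omega
    have hz : (i:ℤ) * ((s:ℤ) + (r:ℤ) - 1) ≤ ((r:ℤ) - 1) * (b:ℤ) := by
      have hi0 : (0:ℤ) ≤ (i:ℤ) := Int.natCast_nonneg i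
      calc (i:ℤ) * ((s:ℤ) + (r:ℤ) - 1) ≤ ((r:ℤ) - 1) * ((s:ℤ) + (r:ℤ) - 1) := by nlinarith
        _ ≤ ((r:ℤ) - 1) * (b:ℤ) := by nlinarith
    nlinarith [hz]
  have e1 := Nat.descFactorial_eq_factorial_mul_choose b r
  have e2 := Nat.descFactorial_eq_factorial_mul_choose (b - s) r
  rw [e1, e2] at key
  have hf : 0 < Nat.factorial r := Nat.factorial_pos r
  rw [mul_assoc, mul_assoc] at key
  exact Nat.le_of_mul_le_mul_left key hf

set_option maxHeartbeats 1000000 in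
open Real in
lemma sparse_TV {N b n : ℕ} {ε : ℝ} (hb : 2 ≤ b) (hε : 0 < ε) (hε1 : ε < 1)
    (hn : (n:ℝ) ≤ (b:ℝ) ^ (1-ε)) (hεb : 1 ≤ ε * Real.log b) (V : Finset (Fin N))
    (h2 : 2 ≤ V.card) (hVn : V.card ≤ n) :
    ((TV V : Finset (Fin N → Fin b)).card : ℝ)
      ≤ Real.exp (-(ε * Real.log b / 4) * V.card) * (b:ℝ)^N := by
  classical
  set m := V.card with hm
  set s := m / 2 with hs
  have hmN : m ≤ N := by
    have := Finset.card_le_univ V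
    simpa using this
  have hbR : (1:ℝ) < (b:ℝ) := by exact_mod_cast (by omega : 1 < b)
  have hbpos : (0:ℝ) < b := by linarith
  have hpow_le : (b:ℝ) ^ (1-ε) ≤ (b:ℝ) := by
    nth_rewrite 2 [← Real.rpow_one (b:ℝ)]
    exact Real.rpow_le_rpow_of_exponent_le (le_of_lt hbR) (by linarith)
  have hmbR : (m:ℝ) ≤ (b:ℝ) ^ (1-ε) := le_trans (by exact_mod_cast hVn) hn
  have hmb : m ≤ b := by exact_mod_cast hmbR.trans hpow_le
  have hnat := sparse_count (b := b) V hmb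
  rw [← hm, ← hs] at hnat
  have hcast : ((TV V : Finset (Fin N → Fin b)).card : ℝ)
      ≤ (Nat.choose b s : ℝ) * (s:ℝ)^m * (b:ℝ)^(N-m) := by
    exact_mod_cast Nat.cast_le.2 hnat
  -- core inequality
  have hs1 : 1 ≤ s := by omega
  have hs1R : (1:ℝ) ≤ (s:ℝ) := by exact_mod_cast hs1
  have hspos : (0:ℝ) < s := by linarith
  have h2s : 2 * (s:ℝ) ≤ (m:ℝ) := by
    have : 2 * s ≤ m := by omega
    exact_mod_cast this
  have hsm : s ≤ m := by omega
  have hmpos : (0:ℝ) < m := by positivity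
  set L2 := Real.log 2 with hL2
  set L3 := Real.log 3 with hL3
  set Lb := Real.log b with hLb
  set Ls := Real.log s with hLs
  set Lm := Real.log m with hLm
  have hL2pos : 0 < L2 := Real.log_pos (by norm_num)
  have hL3pos : 0 < L3 := Real.log_pos (by norm_num)
  have hLbpos : 0 < Lb := Real.log_pos hbR
  have hLsnn : 0 ≤ Ls := Real.log_nonneg hs1R
  have hLsLm : Ls ≤ Lm - L2 := by
    have h1 : (s:ℝ) ≤ (m:ℝ)/2 := by linarith
    have h2' : Real.log s ≤ Real.log ((m:ℝ)/2) := Real.log_le_log hspos h1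
    rwa [Real.log_div (by positivity) (by norm_num)] at h2'
  have hLmb : Lm ≤ (1-ε) * Lb := by
    have h1 : Real.log m ≤ Real.log ((b:ℝ)^(1-ε)) := Real.log_le_log hmpos hmbR
    rwa [Real.log_rpow hbpos] at h1
  have hL2b : L2 ≤ Lb := Real.log_le_log (by norm_num) (by exact_mod_cast hb)
  have hL32 : L3 - L2 ≤ 1/2 := log_ratio_le
  -- linear exponent inequality
  have hlin : (s:ℝ) * L3 + ((m:ℝ) - s) * Ls
      ≤ -(ε * Lb / 4) * m + ((m:ℝ) - s) * Lb := by
    have ht : (m:ℝ)/2 ≤ (m:ℝ) - s := by linarith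
    have htnn : (0:ℝ) ≤ (m:ℝ) - s := by linarith
    have hgap : ε * Lb + L2 ≤ Lb - Ls := by nlinarith
    have hgapnn : (0:ℝ) ≤ ε * Lb + L2 := by nlinarith
    have key1 : ((m:ℝ)/2) * (ε * Lb + L2) ≤ ((m:ℝ) - s) * (Lb - Ls) :=
      mul_le_mul ht hgap hgapnn htnn
    have key2 : (s:ℝ) * L3 ≤ ((m:ℝ)/2) * L3 :=
      mul_le_mul_of_nonneg_right (by linarith) (le_of_lt hL3pos)
    have key3 : (L3 - L2) * ((m:ℝ)/2) ≤ (ε * Lb / 2) * ((m:ℝ)/2) :=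
      mul_le_mul_of_nonneg_right (by linarith) (by linarith)
    ring_nf at key1 key2 key3 ⊢
    linarith [key1, key2, key3]
  -- assemble: 3^s * s^(m-s) ≤ exp(-δm) * b^(m-s)
  have hcore : (3:ℝ)^s * (s:ℝ)^(m-s) ≤ Real.exp (-(ε*Lb/4) * m) * (b:ℝ)^(m-s) := by
    rw [pow_eq_exp' (by norm_num : (0:ℝ) < 3), pow_eq_exp' hspos, pow_eq_exp' hbpos,
      ← Real.exp_add, ← Real.exp_add]
    apply Real.exp_le_exp.2
    have hcast2 : ((m - s : ℕ) : ℝ) = (m:ℝ) - s := by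
      push_cast [Nat.cast_sub hsm]; ring
    rw [hcast2]
    exact hlin
  -- factorial bound
  have hfac : (Nat.choose b s : ℝ) * (s:ℝ)^m ≤ 3^s * (b:ℝ)^s * (s:ℝ)^(m-s) := by
    have h1 : (Nat.choose b s : ℝ) ≤ (b:ℝ)^s / (Nat.factorial s : ℝ) :=
      Nat.choose_le_pow_div s b
    have hfpos : (0:ℝ) < (Nat.factorial s : ℝ) := by exact_mod_cast Nat.factorial_pos s
    have h2' : (s:ℝ)^m = (s:ℝ)^s * (s:ℝ)^(m-s) := by
      rw [← pow_add]; congr 1; omega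
    have h3 : (s:ℝ)^s ≤ 3^s * (Nat.factorial s : ℝ) := self_pow_le
    calc (Nat.choose b s : ℝ) * (s:ℝ)^m
        ≤ ((b:ℝ)^s / (Nat.factorial s : ℝ)) * (s:ℝ)^m := by
          refine mul_le_mul_of_nonneg_right h1 (by positivity)
      _ = (b:ℝ)^s * ((s:ℝ)^s / (Nat.factorial s : ℝ)) * (s:ℝ)^(m-s) := by
          rw [h2']; field_simp
      _ ≤ (b:ℝ)^s * (3:ℝ)^s * (s:ℝ)^(m-s) := by
          refine mul_le_mul_of_nonneg_right (mul_le_mul_of_nonneg_left ?_ (by positivity))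
            (by positivity)
          rw [div_le_iff₀ hfpos]
          exact h3
      _ = 3^s * (b:ℝ)^s * (s:ℝ)^(m-s) := by ring
  -- combine everything
  have hbN : (b:ℝ)^(N-m) * ((b:ℝ)^s * (b:ℝ)^(m-s)) = (b:ℝ)^N := by
    rw [← pow_add, ← pow_add]; congr 1; omega
  calc ((TV V : Finset (Fin N → Fin b)).card : ℝ)
      ≤ (Nat.choose b s : ℝ) * (s:ℝ)^m * (b:ℝ)^(N-m) := hcast
    _ ≤ (3^s * (b:ℝ)^s * (s:ℝ)^(m-s)) * (b:ℝ)^(N-m) := by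
        refine mul_le_mul_of_nonneg_right hfac (by positivity)
    _ = (3^s * (s:ℝ)^(m-s)) * ((b:ℝ)^s * (b:ℝ)^(N-m)) := by ring
    _ ≤ (Real.exp (-(ε*Lb/4) * m) * (b:ℝ)^(m-s)) * ((b:ℝ)^s * (b:ℝ)^(N-m)) := by
        refine mul_le_mul_of_nonneg_right hcore (by positivity)
    _ = Real.exp (-(ε*Lb/4) * m) * ((b:ℝ)^(N-m) * ((b:ℝ)^s * (b:ℝ)^(m-s))) := by ring
    _ = Real.exp (-(ε*Lb/4) * m) * (b:ℝ)^N := by rw [hbN]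

lemma choose_pow_bound {b s m : ℕ} (hs1 : 1 ≤ s) (hsm : s ≤ m) :
    (Nat.choose b s : ℝ) * (s:ℝ)^m ≤ 3^s * (b:ℝ)^s * (s:ℝ)^(m-s) := by
  have hspos : (0:ℝ) < s := by exact_mod_cast hs1
  have h1 : (Nat.choose b s : ℝ) ≤ (b:ℝ)^s / (Nat.factorial s : ℝ) :=
    Nat.choose_le_pow_div s b
  have hfpos : (0:ℝ) < (Nat.factorial s : ℝ) := by exact_mod_cast Nat.factorial_pos s
  have h2' : (s:ℝ)^m = (s:ℝ)^s * (s:ℝ)^(m-s) := by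
    rw [← pow_add]; congr 1; omega
  have h3 : (s:ℝ)^s ≤ 3^s * (Nat.factorial s : ℝ) := self_pow_le
  calc (Nat.choose b s : ℝ) * (s:ℝ)^m
      ≤ ((b:ℝ)^s / (Nat.factorial s : ℝ)) * (s:ℝ)^m := by
        refine mul_le_mul_of_nonneg_right h1 (by positivity)
    _ = (b:ℝ)^s * ((s:ℝ)^s / (Nat.factorial s : ℝ)) * (s:ℝ)^(m-s) := by
        rw [h2']; field_simp
    _ ≤ (b:ℝ)^s * (3:ℝ)^s * (s:ℝ)^(m-s) := by
        refine mul_le_mul_of_nonneg_right (mul_le_mul_of_nonneg_left ?_ (by positivity))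
          (by positivity)
        rw [div_le_iff₀ hfpos]
        exact h3
    _ = 3^s * (b:ℝ)^s * (s:ℝ)^(m-s) := by ring

set_option maxHeartbeats 1000000 in
open Real in
lemma dense_TV {N b n : ℕ} {ε : ℝ} (hb : 2 ≤ b) (hε : 0 < ε) (hε1 : ε < 1)
    (hn : (n:ℝ) ≤ (b:ℝ) ^ (1-ε)) (V : Finset (Fin N))
    (h2 : 2 ≤ V.card) (hVn : V.card ≤ n) :
    ((TV V : Finset (Fin N → Fin b)).card : ℝ)
      ≤ Real.exp (-(1/4000) * V.card) * (b:ℝ)^N := by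
  classical
  set m := V.card with hm
  set s := m / 2 with hs
  have hmN : m ≤ N := by
    have := Finset.card_le_univ V
    simpa using this
  have hbR : (1:ℝ) < (b:ℝ) := by exact_mod_cast (by omega : 1 < b)
  have hbpos : (0:ℝ) < b := by linarith
  have hmbR : (m:ℝ) < (b:ℝ) := by
    have h1 : (m:ℝ) ≤ (b:ℝ)^(1-ε) := le_trans (by exact_mod_cast hVn) hn
    have h2' : (b:ℝ)^(1-ε) < (b:ℝ)^(1:ℝ) :=
      Real.rpow_lt_rpow_of_exponent_lt hbR (by linarith)
    rw [Real.rpow_one] at h2'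
    linarith
  have hmb : m < b := by exact_mod_cast hmbR
  have hs1 : 1 ≤ s := by omega
  have hs1R : (1:ℝ) ≤ (s:ℝ) := by exact_mod_cast hs1
  have hspos : (0:ℝ) < s := by linarith
  have h2s : 2 * s ≤ m := by omega
  have h2sR : 2 * (s:ℝ) ≤ (m:ℝ) := by exact_mod_cast h2s
  have hmpos : (0:ℝ) < m := by
    have : 0 < m := by omega
    exact_mod_cast this
  rcases le_or_gt (16 * m) b with hA | hB
  · -- case A : b ≥ 16 m, use image counting
    have hnat := sparse_count (b := b) V (by omega : V.card ≤ b)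
    rw [← hm, ← hs] at hnat
    have hcast : ((TV V : Finset (Fin N → Fin b)).card : ℝ)
        ≤ (Nat.choose b s : ℝ) * (s:ℝ)^m * (b:ℝ)^(N-m) := by
      exact_mod_cast Nat.cast_le.2 hnat
    have hfac := choose_pow_bound (b := b) hs1 (by omega : s ≤ m)
    set L3 := Real.log 3 with hL3
    set Lb := Real.log b with hLb
    set Ls := Real.log s with hLs
    have hL3pos : 0 < L3 := Real.log_pos (by norm_num)
    have hgap : Ls + (L3 + 1) ≤ Lb := by
      have h32 : (32:ℝ) * s ≤ b := by
        have : 32 * s ≤ b := by omega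
        exact_mod_cast this
      have hlog : Real.log (32 * (s:ℝ)) ≤ Lb := Real.log_le_log (by positivity) h32
      rw [Real.log_mul (by norm_num) (by positivity)] at hlog
      have := log32_ge
      linarith
    have hlin : (s:ℝ) * L3 + ((m:ℝ) - s) * Ls
        ≤ -(1/4000) * m + ((m:ℝ) - s) * Lb := by
      have ht : (m:ℝ)/2 ≤ (m:ℝ) - s := by linarith
      have htnn : (0:ℝ) ≤ (m:ℝ) - s := by linarith
      have hLsnn : 0 ≤ Ls := Real.log_nonneg hs1R
      have key1 : ((m:ℝ)/2) * (L3 + 1) ≤ ((m:ℝ) - s) * (Lb - Ls) := by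
        refine mul_le_mul ht (by linarith) (by positivity) htnn
      have key2 : (s:ℝ) * L3 ≤ ((m:ℝ)/2) * L3 :=
        mul_le_mul_of_nonneg_right (by linarith) (le_of_lt hL3pos)
      ring_nf at key1 key2 ⊢
      linarith [key1, key2]
    have hcore : (3:ℝ)^s * (s:ℝ)^(m-s) ≤ Real.exp (-(1/4000) * m) * (b:ℝ)^(m-s) := by
      rw [pow_eq_exp' (by norm_num : (0:ℝ) < 3), pow_eq_exp' hspos, pow_eq_exp' hbpos,
        ← Real.exp_add, ← Real.exp_add]
      apply Real.exp_le_exp.2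
      have hcast2 : ((m - s : ℕ) : ℝ) = (m:ℝ) - s := by
        push_cast [Nat.cast_sub (by omega : s ≤ m)]; ring
      rw [hcast2]
      exact hlin
    have hbN : (b:ℝ)^(N-m) * ((b:ℝ)^s * (b:ℝ)^(m-s)) = (b:ℝ)^N := by
      rw [← pow_add, ← pow_add]; congr 1; omega
    calc ((TV V : Finset (Fin N → Fin b)).card : ℝ)
        ≤ (Nat.choose b s : ℝ) * (s:ℝ)^m * (b:ℝ)^(N-m) := hcast
      _ ≤ (3^s * (b:ℝ)^s * (s:ℝ)^(m-s)) * (b:ℝ)^(N-m) := by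
          refine mul_le_mul_of_nonneg_right hfac (by positivity)
      _ = (3^s * (s:ℝ)^(m-s)) * ((b:ℝ)^s * (b:ℝ)^(N-m)) := by ring
      _ ≤ (Real.exp (-(1/4000) * m) * (b:ℝ)^(m-s)) * ((b:ℝ)^s * (b:ℝ)^(N-m)) := by
          refine mul_le_mul_of_nonneg_right hcore (by positivity)
      _ = Real.exp (-(1/4000) * m) * ((b:ℝ)^(N-m) * ((b:ℝ)^s * (b:ℝ)^(m-s))) := by ring
      _ = Real.exp (-(1/4000) * m) * (b:ℝ)^N := by rw [hbN]
  · -- case B : b < 16 m, moment method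
    set r := (m + 9) / 10 with hr
    have hr1 : 1 ≤ r := by omega
    have hsrm : s + r ≤ m := by omega
    have hsrb : s + r ≤ b := by omega
    have hrb : r < b := by omega
    set c := b - s - r + 1 with hc
    have hcpos : 1 ≤ c := by omega
    have hnat := moment_count (b := b) V r
    rw [← hm, ← hs] at hnat
    have hratio := choose_ratio (b := b) (s := s) (r := r) hsrb
    rw [← hc] at hratio
    -- cast things
    have hCbs_pos : (0:ℝ) < (Nat.choose (b - s) r : ℝ) := by
      have : 0 < Nat.choose (b - s) r := Nat.choose_pos (by omega)
      exact_mod_cast this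
    have hcR : ((c:ℕ):ℝ) = (b:ℝ) - s - r + 1 := by
      rw [hc]
      push_cast [Nat.cast_sub (by omega : s ≤ b), Nat.cast_sub (by omega : r ≤ b - s)]
      ring
    have hcRpos : (0:ℝ) < (c:ℝ) := by exact_mod_cast hcpos
    have hbrR : ((b - r : ℕ):ℝ) = (b:ℝ) - r := by
      push_cast [Nat.cast_sub (by omega : r ≤ b)]; ring
    have hbrpos : (0:ℝ) < ((b - r:ℕ):ℝ) := by
      have : 0 < b - r := by omega
      exact_mod_cast this
    -- the core log inequality
    set Lb := Real.log b with hLb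
    set Lbr := Real.log ((b - r : ℕ):ℝ) with hLbr
    set Lc := Real.log (c:ℝ) with hLc
    have hrR : (m:ℝ)/10 ≤ (r:ℝ) := by
      have : m ≤ 10 * r := by omega
      have := (Nat.cast_le (α := ℝ)).2 this
      push_cast at this; linarith
    have hrRnn : (0:ℝ) ≤ (r:ℝ) := by positivity
    have hx6 : (s:ℝ) + r - 1 ≤ (3/5) * m := by
      have h1 : 10 * (r - 1) ≤ m - 1 := by omega
      have h1R : 10 * ((r:ℝ) - 1) ≤ (m:ℝ) - 1 := by
        have := (Nat.cast_le (α := ℝ)).2 h1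
        push_cast [Nat.cast_sub hr1, Nat.cast_sub (by omega : 1 ≤ m)] at this
        linarith
      linarith
    have hxnn : (0:ℝ) ≤ ((s:ℝ) + r - 1) := by linarith
    have hx35 : ((s:ℝ) + r - 1)/b ≤ 3/5 := by
      rw [div_le_iff₀ hbpos]
      nlinarith
    have hf1 : Lbr - Lb ≤ -((r:ℝ)/b) := by
      have h1 : Real.log (((b - r:ℕ):ℝ)/b) ≤ ((b - r:ℕ):ℝ)/b - 1 :=
        Real.log_le_sub_one_of_pos (by positivity)
      rw [Real.log_div (by positivity) (by positivity)] at h1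
      have e : ((b - r:ℕ):ℝ)/b - 1 = -((r:ℝ)/b) := by
        rw [hbrR]; field_simp; ring
      rw [e] at h1
      exact h1
    have hf2 : Lb - Lc ≤ (8/5) * (((s:ℝ) + r - 1)/b) := by
      set x := ((s:ℝ) + r - 1)/b with hx
      have hx0 : 0 ≤ x := by positivity
      have hchord := exp_chord hx0 hx35
      have h1mx : 1 - x = (c:ℝ)/b := by
        rw [hx, hcR]; field_simp; ring
      rw [h1mx] at hchord
      have hlog := Real.log_le_log (Real.exp_pos _) hchord
      rw [Real.log_exp, Real.log_div (by positivity) (by positivity), ← hLc, ← hLb] at hlog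
      linarith
    have hlin : (r:ℝ) * Lb + (m:ℝ) * Lbr ≤ -(1/4000) * m + ((m:ℝ) * Lb + (r:ℝ) * Lc) := by
      have h1 : (m:ℝ) * ((r:ℝ)/b) ≤ (m:ℝ) * (Lb - Lbr) := by
        refine mul_le_mul_of_nonneg_left (by linarith) (le_of_lt hmpos)
      have h2' : (r:ℝ) * (-(8/5) * (((s:ℝ) + r - 1)/b)) ≤ (r:ℝ) * (Lc - Lb) := by
        refine mul_le_mul_of_nonneg_left (by linarith) hrRnn
      have e2 : (m:ℝ)/25 ≤ (m:ℝ) - (8/5) * ((s:ℝ) + r - 1) := by linarith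
      have e3 : ((m:ℝ)/10) * ((m:ℝ)/25) ≤ (r:ℝ) * ((m:ℝ) - (8/5) * ((s:ℝ) + r - 1)) := by
        refine mul_le_mul hrR e2 (by positivity) hrRnn
      have hb16 : (b:ℝ) ≤ 16 * m := by
        have : b ≤ 16 * m := by omega
        exact_mod_cast this
      have h3 : (m:ℝ)/4000 ≤ ((r:ℝ) * ((m:ℝ) - (8/5) * ((s:ℝ) + r - 1)))/b := by
        rw [le_div_iff₀ hbpos]
        nlinarith
      have h4 : ((r:ℝ) * ((m:ℝ) - (8/5) * ((s:ℝ) + r - 1)))/b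
          = (m:ℝ) * ((r:ℝ)/b) + (r:ℝ) * (-(8/5) * (((s:ℝ) + r - 1)/b)) := by
        field_simp; ring
      rw [h4] at h3
      linarith [h1, h2', h3]
    -- exp form core
    have hcore : (b:ℝ)^r * ((b - r:ℕ):ℝ)^m
        ≤ Real.exp (-(1/4000) * m) * ((b:ℝ)^m * ((c:ℕ):ℝ)^r) := by
      rw [pow_eq_exp' hbpos, pow_eq_exp' hbrpos, pow_eq_exp' hbpos, pow_eq_exp' hcRpos,
        ← Real.exp_add, ← Real.exp_add, ← Real.exp_add]
      apply Real.exp_le_exp.2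
      rw [← hLb, ← hLbr, ← hLc]
      linarith [hlin]
    -- assemble
    have hcastmom : ((TV V : Finset (Fin N → Fin b)).card : ℝ) * (Nat.choose (b-s) r : ℝ)
        ≤ (Nat.choose b r : ℝ) * (((b - r:ℕ):ℝ)^m * (b:ℝ)^(N-m)) := by
      exact_mod_cast Nat.cast_le.2 hnat
    have hcastratio : (Nat.choose b r : ℝ) * ((c:ℕ):ℝ)^r
        ≤ (Nat.choose (b-s) r : ℝ) * (b:ℝ)^r := by
      exact_mod_cast Nat.cast_le.2 hratio
    have hXpos : (0:ℝ) ≤ ((TV V : Finset (Fin N → Fin b)).card : ℝ) := by positivity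
    set X := ((TV V : Finset (Fin N → Fin b)).card : ℝ) with hX
    set Cbs := (Nat.choose (b-s) r : ℝ) with hCbs
    set Cbr := (Nat.choose b r : ℝ) with hCbr
    have hCbrnn : (0:ℝ) ≤ Cbr := by positivity
    have hcrpow : (0:ℝ) < ((c:ℕ):ℝ)^r := by positivity
    have key : X * (Cbs * ((c:ℕ):ℝ)^r)
        ≤ (Real.exp (-(1/4000) * m) * (b:ℝ)^N) * (Cbs * ((c:ℕ):ℝ)^r) := by
      have hbN : (b:ℝ)^m * (b:ℝ)^(N-m) = (b:ℝ)^N := by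
        rw [← pow_add]; congr 1; omega
      calc X * (Cbs * ((c:ℕ):ℝ)^r) = (X * Cbs) * ((c:ℕ):ℝ)^r := by ring
        _ ≤ (Cbr * (((b - r:ℕ):ℝ)^m * (b:ℝ)^(N-m))) * ((c:ℕ):ℝ)^r := by
            refine mul_le_mul_of_nonneg_right hcastmom (le_of_lt hcrpow)
        _ = (Cbr * ((c:ℕ):ℝ)^r) * (((b - r:ℕ):ℝ)^m * (b:ℝ)^(N-m)) := by ring
        _ ≤ (Cbs * (b:ℝ)^r) * (((b - r:ℕ):ℝ)^m * (b:ℝ)^(N-m)) := by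
            refine mul_le_mul_of_nonneg_right hcastratio (by positivity)
        _ = Cbs * (b:ℝ)^(N-m) * ((b:ℝ)^r * ((b - r:ℕ):ℝ)^m) := by ring
        _ ≤ Cbs * (b:ℝ)^(N-m) * (Real.exp (-(1/4000) * m) * ((b:ℝ)^m * ((c:ℕ):ℝ)^r)) := by
            refine mul_le_mul_of_nonneg_left hcore (by positivity)
        _ = (Real.exp (-(1/4000) * m) * ((b:ℝ)^m * (b:ℝ)^(N-m))) * (Cbs * ((c:ℕ):ℝ)^r) := by
            ring
        _ = (Real.exp (-(1/4000) * m) * (b:ℝ)^N) * (Cbs * ((c:ℕ):ℝ)^r) := by rw [hbN]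
    have hpos2 : (0:ℝ) < Cbs * ((c:ℕ):ℝ)^r := by positivity
    exact le_of_mul_le_mul_right key hpos2

/-- Existence of good partitions: there is a universal constant `C > 0` such that
for every `0 < ε < 1` and integers `N ≥ 2`, `b ≥ 2`, `n ≥ 1` with `n ≤ b^(1-ε)`,
there exist `K ≤ ⌈C · ε⁻¹ · (log N / log b)⌉` partitions of `Fin N` into `b` parts
(encoded by functions `g i : Fin N → Fin b`) such that every nonempty subset
`V ⊆ Fin N` of size at most `n` has exactly one element in some part of some partition. -/
theorem stmt_3 :
    ∃ C : ℝ, 0 < C ∧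
      ∀ (ε : ℝ), 0 < ε → ε < 1 →
        ∀ (N b n : ℕ), 2 ≤ N → 2 ≤ b → 1 ≤ n →
          (n : ℝ) ≤ (b : ℝ) ^ (1 - ε) →
          ∃ (K : ℕ), 0 < K ∧
            (K : ℤ) ≤ ⌈C * ε⁻¹ * (Real.log N / Real.log b)⌉ ∧
            ∃ g : Fin K → (Fin N → Fin b),
              ∀ V : Finset (Fin N), V.Nonempty → V.card ≤ n →
                ∃ (i : Fin K) (j : Fin b),
                  (V.filter (fun x => g i x = j)).card = 1 := by
  refine ⟨1000000, by norm_num, ?_⟩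
  intro ε hε hε1 N b n hN hb hn hnb
  have hLNpos : 0 < Real.log N := Real.log_pos (by exact_mod_cast (by omega : 1 < N))
  have hLbpos : 0 < Real.log b := Real.log_pos (by exact_mod_cast (by omega : 1 < b))
  set x₀ : ℝ := 1000000 * ε⁻¹ * (Real.log N / Real.log b) with hx₀
  have hx₀pos : 0 < x₀ := by
    rw [hx₀]; positivity
  refine ⟨⌈x₀⌉₊, Nat.ceil_pos.2 hx₀pos, ?_, ?_⟩
  · rw [Int.natCast_ceil_eq_ceil (le_of_lt hx₀pos)]
  · set K := ⌈x₀⌉₊ with hK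
    have hKpos : 0 < K := Nat.ceil_pos.2 hx₀pos
    have hKge : x₀ ≤ (K:ℝ) := Nat.le_ceil x₀
    have hlog2N : Real.log 2 ≤ Real.log N :=
      Real.log_le_log (by norm_num) (by exact_mod_cast hN)
    have hL2pos : (0:ℝ) < Real.log 2 := Real.log_pos (by norm_num)
    have hfinal : ∀ δ : ℝ, 0 < δ → Real.log 2 + Real.log N ≤ δ * K →
        (N:ℝ) * Real.exp (-δ * K) ≤ 1/2 := by
      intro δ hδ hδK
      have h1 : Real.exp (-δ * K) ≤ Real.exp (-(Real.log 2 + Real.log N)) := by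
        apply Real.exp_le_exp.2
        linarith
      have h2 : Real.exp (-(Real.log 2 + Real.log N)) = 1/(2 * N) := by
        rw [Real.exp_neg, Real.exp_add, Real.exp_log (by norm_num : (0:ℝ) < 2),
          Real.exp_log (by positivity : (0:ℝ) < (N:ℝ))]
        rw [one_div]
      have hNpos : (0:ℝ) < N := by positivity
      calc (N:ℝ) * Real.exp (-δ * K) ≤ (N:ℝ) * (1/(2*N)) := by
            rw [← h2]
            exact mul_le_mul_of_nonneg_left h1 (le_of_lt hNpos)
        _ = 1/2 := by field_simp
    rcases le_or_gt 1 (ε * Real.log b) with hreg | hreg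
    · -- sparse regime
      obtain ⟨g, hg⟩ := main_count hN hb hKpos (ε * Real.log b / 4)
        (fun V h2V hVn => sparse_TV hb hε hε1 hnb hreg V h2V hVn)
        (by
          refine hfinal _ (by positivity) ?_
          have hδx : (ε * Real.log b / 4) * x₀ = 250000 * Real.log N := by
            rw [hx₀]
            field_simp
            ring
          have h3 : (ε * Real.log b / 4) * x₀ ≤ (ε * Real.log b / 4) * K :=
            mul_le_mul_of_nonneg_left hKge (by positivity)
          rw [hδx] at h3
          linarith)
      exact ⟨g, hg⟩
    · -- dense regime
      obtain ⟨g, hg⟩ := main_count hN hb hKpos (1/4000 : ℝ)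
        (fun V h2V hVn => dense_TV hb hε hε1 hnb V h2V hVn)
        (by
          refine hfinal _ (by norm_num) ?_
          have hδx : 250 * (Real.log N / (ε * Real.log b)) = (1/4000) * x₀ := by
            rw [hx₀]
            field_simp
            ring
          have h0 : Real.log N ≤ Real.log N / (ε * Real.log b) := by
            rw [le_div_iff₀ (by positivity : (0:ℝ) < ε * Real.log b)]
            nlinarith
          have h3 : (1/4000 : ℝ) * x₀ ≤ (1/4000) * K :=
            mul_le_mul_of_nonneg_left hKge (by norm_num)
          linarith)
      exact ⟨g, hg⟩
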